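/- Let i < j be positive integers, let k = i²·j²·π⁴ (a resonant value, so that μ_i(k) = μ_j(k)), and let β < −μ_i(k). Then for every pair of real numbers (a, b) satisfying (i²π²·a² + j²π²·b²)/2 = −(β + μ_i(k)), the function u(x) = a·sin(iπx) + b·sin(jπx) is a stationary beam solution with parameters β, k. Consequently, the set of stationary beam solutions with parameters β, k is infinite. -/

import Mathlib

open Real

/-- `μ_n(k) = k/(n²π²) + n²π²`. -/
noncomputable def mu (n : ℕ) (k : ℝ) : ℝ := k / ((n : ℝ)^2 * π^2) + (n : ℝ)^2 * π^2

/-- A stationary beam solution with parameters `β ∈ ℝ`, `k > 0`: a four-times continuously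
differentiable function satisfying the beam equation on `[0,1]`
together with the hinged boundary conditions `u(0) = u(1) = u''(0) = u''(1) = 0`. -/
def IsStationarySolution (β k : ℝ) (u : ℝ → ℝ) : Prop :=
  ContDiff ℝ 4 u ∧
  (∀ x ∈ Set.Icc (0 : ℝ) 1,
    iteratedDeriv 4 u x
      - (β + ∫ y in (0 : ℝ)..1, (deriv u y)^2) * iteratedDeriv 2 u x + k * u x = 0) ∧
  u 0 = 0 ∧ u 1 = 0 ∧ iteratedDeriv 2 u 0 = 0 ∧ iteratedDeriv 2 u 1 = 0

private lemma hasDerivAt_sin_cmul (c x : ℝ) :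
    HasDerivAt (fun x => Real.sin (c * x)) (c * Real.cos (c * x)) x := by
  simpa [mul_comm] using (hasDerivAt_const_mul (x := x) c).sin

private lemma hasDerivAt_cos_cmul (c x : ℝ) :
    HasDerivAt (fun x => Real.cos (c * x)) (-(c * Real.sin (c * x))) x := by
  simpa [mul_comm] using (hasDerivAt_const_mul (x := x) c).cos

private lemma key (i j : ℕ) (hi : 1 ≤ i) (hij : i < j) (k β a b : ℝ)
    (hk : k = (i : ℝ)^2 * (j : ℝ)^2 * π^4)
    (hab : ((i : ℝ)^2 * π^2 * a^2 + (j : ℝ)^2 * π^2 * b^2) / 2 = -(β + mu i k)) :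
    IsStationarySolution β k
      (fun x => a * Real.sin ((i : ℝ) * π * x) + b * Real.sin ((j : ℝ) * π * x)) := by
  have hπ : 0 < π := Real.pi_pos
  have hi0 : (0:ℝ) < i := by exact_mod_cast Nat.lt_of_lt_of_le Nat.zero_lt_one hi
  have hj0 : (0:ℝ) < j := by exact_mod_cast Nat.lt_of_lt_of_le Nat.zero_lt_one (hi.trans hij.le)
  set c : ℝ := (i : ℝ) * π with hc
  set d : ℝ := (j : ℝ) * π with hd
  set u : ℝ → ℝ := fun x => a * Real.sin (c * x) + b * Real.sin (d * x) with hu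
  have hcpos : 0 < c := by rw [hc]; positivity
  have hdpos : 0 < d := by rw [hd]; positivity
  have hij' : (i:ℝ) < j := by exact_mod_cast hij
  have hcd : c + d ≠ 0 := by positivity
  have hcd' : c - d ≠ 0 := by
    rw [hc, hd]; intro h; nlinarith
  have hk' : k = c^2 * d^2 := by rw [hk, hc, hd]; ring
  have hmu : mu i k = c^2 + d^2 := by
    simp only [mu, hk, hc, hd]
    have : (i:ℝ) ≠ 0 := ne_of_gt hi0
    field_simp
    ring
  have hab' : (a^2*c^2 + b^2*d^2)/2 = -(β + mu i k) := by
    rw [hc, hd]; linear_combination hab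
  have hsum : β + (a^2*c^2 + b^2*d^2)/2 = -(c^2 + d^2) := by
    rw [hab', hmu]; ring
  -- sine vanishing facts
  have hsc : Real.sin c = 0 := by rw [hc]; exact Real.sin_nat_mul_pi i
  have hsd : Real.sin d = 0 := by rw [hd]; exact Real.sin_nat_mul_pi j
  have hs2c : Real.sin (2*c) = 0 := by
    rw [hc, show (2:ℝ)*((i:ℝ)*π) = ((2*i : ℕ):ℝ)*π by push_cast; ring]
    exact Real.sin_nat_mul_pi _
  have hs2d : Real.sin (2*d) = 0 := by
    rw [hd, show (2:ℝ)*((j:ℝ)*π) = ((2*j : ℕ):ℝ)*π by push_cast; ring]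
    exact Real.sin_nat_mul_pi _
  have hscd : Real.sin (c+d) = 0 := by
    rw [hc, hd, show (i:ℝ)*π + (j:ℝ)*π = ((i+j : ℕ):ℝ)*π by push_cast; ring]
    exact Real.sin_nat_mul_pi _
  have hssub : Real.sin (c-d) = 0 := by
    rw [hc, hd, show (i:ℝ)*π - (j:ℝ)*π = (((i:ℤ) - (j:ℤ) : ℤ):ℝ)*π by push_cast; ring]
    exact Real.sin_int_mul_pi _
  -- derivatives
  have d1 : ∀ x, HasDerivAt u (a*(c*Real.cos (c*x)) + b*(d*Real.cos (d*x))) x :=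
    fun x => ((hasDerivAt_sin_cmul c x).const_mul a).add ((hasDerivAt_sin_cmul d x).const_mul b)
  have hd1 : deriv u = fun x => a*(c*Real.cos (c*x)) + b*(d*Real.cos (d*x)) :=
    funext fun x => (d1 x).deriv
  have d2 : ∀ x : ℝ, HasDerivAt (fun x => a*(c*Real.cos (c*x)) + b*(d*Real.cos (d*x)))
      (a*(c*(-(c*Real.sin (c*x)))) + b*(d*(-(d*Real.sin (d*x))))) x :=
    fun x => (((hasDerivAt_cos_cmul c x).const_mul c).const_mul a).add
      (((hasDerivAt_cos_cmul d x).const_mul d).const_mul b)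
  have hd2 : iteratedDeriv 2 u = fun x => a*(c*(-(c*Real.sin (c*x)))) + b*(d*(-(d*Real.sin (d*x)))) := by
    rw [show (2:ℕ) = 1 + 1 from rfl, iteratedDeriv_succ, iteratedDeriv_one, hd1]
    exact funext fun x => (d2 x).deriv
  have d3 : ∀ x : ℝ, HasDerivAt (fun x => a*(c*(-(c*Real.sin (c*x)))) + b*(d*(-(d*Real.sin (d*x)))))
      (a*(c*(-(c*(c*Real.cos (c*x))))) + b*(d*(-(d*(d*Real.cos (d*x)))))) x :=
    fun x => ((((hasDerivAt_sin_cmul c x).const_mul c).neg.const_mul c).const_mul a).add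
      ((((hasDerivAt_sin_cmul d x).const_mul d).neg.const_mul d).const_mul b)
  have hd3 : iteratedDeriv 3 u = fun x => a*(c*(-(c*(c*Real.cos (c*x))))) + b*(d*(-(d*(d*Real.cos (d*x))))) := by
    rw [show (3:ℕ) = 2 + 1 from rfl, iteratedDeriv_succ, hd2]
    exact funext fun x => (d3 x).deriv
  have d4 : ∀ x : ℝ, HasDerivAt (fun x => a*(c*(-(c*(c*Real.cos (c*x))))) + b*(d*(-(d*(d*Real.cos (d*x))))))
      (a*(c*(-(c*(c*(-(c*Real.sin (c*x)))))))+ b*(d*(-(d*(d*(-(d*Real.sin (d*x)))))))) x :=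
    fun x => (((((hasDerivAt_cos_cmul c x).const_mul c).const_mul c).neg.const_mul c).const_mul a).add
      (((((hasDerivAt_cos_cmul d x).const_mul d).const_mul d).neg.const_mul d).const_mul b)
  have hd4 : iteratedDeriv 4 u = fun x =>
      a*(c*(-(c*(c*(-(c*Real.sin (c*x)))))))+ b*(d*(-(d*(d*(-(d*Real.sin (d*x))))))) := by
    rw [show (4:ℕ) = 3 + 1 from rfl, iteratedDeriv_succ, hd3]
    exact funext fun x => (d4 x).deriv
  -- the integral
  have hI : (∫ y in (0:ℝ)..1, (deriv u y)^2) = (a^2*c^2 + b^2*d^2)/2 := by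
    have hF : ∀ x ∈ Set.uIcc (0:ℝ) 1, HasDerivAt (fun x => (a^2*c^2+b^2*d^2)/2 * x
        + a^2*c/4 * Real.sin ((2*c)*x) + b^2*d/4 * Real.sin ((2*d)*x)
        + a*b*c*d/(c+d) * Real.sin ((c+d)*x) + a*b*c*d/(c-d) * Real.sin ((c-d)*x))
        ((a*(c*Real.cos (c*x)) + b*(d*Real.cos (d*x)))^2) x := by
      intro x _
      have h := ((((hasDerivAt_const_mul (x := x) ((a^2*c^2+b^2*d^2)/2)).add
          ((hasDerivAt_sin_cmul (2*c) x).const_mul (a^2*c/4))).add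
          ((hasDerivAt_sin_cmul (2*d) x).const_mul (b^2*d/4))).add
          ((hasDerivAt_sin_cmul (c+d) x).const_mul (a*b*c*d/(c+d)))).add
          ((hasDerivAt_sin_cmul (c-d) x).const_mul (a*b*c*d/(c-d)))
      refine h.congr_deriv ?_
      rw [show (2*c)*x = 2*(c*x) by ring, show (2*d)*x = 2*(d*x) by ring,
          Real.cos_two_mul, Real.cos_two_mul,
          show (c+d)*x = c*x + d*x by ring, Real.cos_add,
          show (c-d)*x = c*x - d*x by ring, Real.cos_sub]
      field_simp
      ring
    have hint : IntervalIntegrable (fun x => (a*(c*Real.cos (c*x)) + b*(d*Real.cos (d*x)))^2)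
        MeasureTheory.volume 0 1 := by
      have hcont : Continuous (fun x => (a*(c*Real.cos (c*x)) + b*(d*Real.cos (d*x)))^2) := by
        fun_prop
      exact hcont.intervalIntegrable 0 1
    simp only [hd1]
    rw [intervalIntegral.integral_eq_sub_of_hasDerivAt hF hint]
    simp [hs2c, hs2d, hscd, hssub]
  refine ⟨?_, ?_, ?_, ?_, ?_, ?_⟩
  · exact (contDiff_const.mul (Real.contDiff_sin.comp (contDiff_const.mul contDiff_id))).add
      (contDiff_const.mul (Real.contDiff_sin.comp (contDiff_const.mul contDiff_id)))
  · intro x _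
    rw [hd4, hd2, hI]
    simp only [hu]
    rw [hsum, hk']
    ring
  · simp [hu]
  · simp [hu, hsc, hsd]
  · rw [hd2]; simp
  · rw [hd2]; simp [hsc, hsd]

/-- For the resonant value `k = i²j²π⁴` (`i < j`) and `β < −μ_i(k)`, every pair `(a, b)` on the
ellipse `(i²π²a² + j²π²b²)/2 = −(β + μ_i(k))` yields a stationary beam solution
`u(x) = a·sin(iπx) + b·sin(jπx)`; consequently, there are infinitely many stationary beam
solutions with parameters `β`, `k`. -/
theorem resonant_infinitely_many_solutions (i j : ℕ) (hi : 1 ≤ i) (hij : i < j)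
    (k β : ℝ) (hk : k = (i : ℝ)^2 * (j : ℝ)^2 * π^4) (hβ : β < -mu i k) :
    (∀ a b : ℝ,
        ((i : ℝ)^2 * π^2 * a^2 + (j : ℝ)^2 * π^2 * b^2) / 2 = -(β + mu i k) →
        IsStationarySolution β k
          (fun x => a * Real.sin ((i : ℝ) * π * x) + b * Real.sin ((j : ℝ) * π * x))) ∧
    {f : Set.Icc (0 : ℝ) 1 → ℝ |
        ∃ u : ℝ → ℝ, IsStationarySolution β k u ∧
          ∀ x : Set.Icc (0 : ℝ) 1, f x = u x}.Infinite := by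
  refine ⟨fun a b hab => key i j hi hij k β a b hk hab, ?_⟩
  have hπ : 0 < π := Real.pi_pos
  have hi0 : (0:ℝ) < i := by exact_mod_cast Nat.lt_of_lt_of_le Nat.zero_lt_one hi
  have hj0 : (0:ℝ) < j := by exact_mod_cast Nat.lt_of_lt_of_le Nat.zero_lt_one (hi.trans hij.le)
  have hij' : (i:ℝ) < j := by exact_mod_cast hij
  have hRpos : 0 < -(β + mu i k) := by linarith
  set R : ℝ := -(β + mu i k) with hR
  set c : ℝ := (i : ℝ) * π with hc
  set d : ℝ := (j : ℝ) * π with hd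
  have hcpos : 0 < c := by rw [hc]; positivity
  have hdpos : 0 < d := by rw [hd]; positivity
  set amax : ℝ := Real.sqrt (2*R) / c with hamaxdef
  have hamax : 0 < amax := div_pos (Real.sqrt_pos.mpr (by linarith)) hcpos
  set bf : ℝ → ℝ := fun a => Real.sqrt (2*R - c^2*a^2) / d with hbf
  -- ellipse condition
  have hell : ∀ a ∈ Set.Ioo (0:ℝ) amax,
      ((i : ℝ)^2 * π^2 * a^2 + (j : ℝ)^2 * π^2 * (bf a)^2) / 2 = -(β + mu i k) := by
    intro a ha
    obtain ⟨ha0, ha1⟩ := ha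
    have hca : a * c < Real.sqrt (2*R) := (lt_div_iff₀ hcpos).mp ha1
    have hca2 : (a*c)*(a*c) < Real.sqrt (2*R) * Real.sqrt (2*R) :=
      mul_lt_mul'' hca hca (by positivity) (by positivity)
    have h1 : c^2*a^2 ≤ 2*R := by
      nlinarith [Real.sq_sqrt (by linarith : (0:ℝ) ≤ 2*R)]
    have h2 : Real.sqrt (2*R - c^2*a^2)^2 = 2*R - c^2*a^2 := Real.sq_sqrt (by linarith)
    have hcc : (i:ℝ)^2 * π^2 = c^2 := by rw [hc]; ring
    have hdd : (j:ℝ)^2 * π^2 = d^2 := by rw [hd]; ring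
    rw [hcc, hdd, hbf, ← hR]
    simp only [div_pow, h2]
    field_simp
    ring
  -- the injective family
  set F : ℝ → (Set.Icc (0:ℝ) 1 → ℝ) :=
    fun a => fun x => a * Real.sin (c * ↑x) + bf a * Real.sin (d * ↑x) with hF
  have hmem : ∀ a ∈ Set.Ioo (0:ℝ) amax, F a ∈
      {f : Set.Icc (0 : ℝ) 1 → ℝ |
        ∃ u : ℝ → ℝ, IsStationarySolution β k u ∧
          ∀ x : Set.Icc (0 : ℝ) 1, f x = u x} := by
    intro a ha
    refine ⟨fun x => a * Real.sin ((i:ℝ) * π * x) + bf a * Real.sin ((j:ℝ) * π * x),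
      key i j hi hij k β a (bf a) hk (hell a ha), fun x => ?_⟩
    rw [hF, hc, hd]
  have hptmem : (1:ℝ)/j ∈ Set.Icc (0:ℝ) 1 := by
    constructor
    · positivity
    · rw [div_le_one hj0]; exact_mod_cast Nat.one_le_of_lt hij
  have hsinpos : 0 < Real.sin (c * ((1:ℝ)/j)) := by
    apply Real.sin_pos_of_pos_of_lt_pi
    · positivity
    · rw [hc]
      rw [show (i:ℝ) * π * (1/j) = ((i:ℝ)/j) * π by ring]
      nlinarith [(div_lt_one hj0).mpr hij']
  have hsd0 : Real.sin (d * ((1:ℝ)/j)) = 0 := by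
    rw [hd, show (j:ℝ) * π * (1/j) = π by field_simp]
    exact Real.sin_pi
  have hinj : Set.InjOn F (Set.Ioo (0:ℝ) amax) := by
    intro a1 _ a2 _ heq
    have h := congrFun heq ⟨(1:ℝ)/j, hptmem⟩
    simp only [hF, hsd0, mul_zero, add_zero] at h
    exact mul_right_cancel₀ (ne_of_gt hsinpos) h
  exact Set.Infinite.mono (by rintro f ⟨a, ha, rfl⟩; exact hmem a ha)
    ((Set.Ioo_infinite hamax).image hinj)
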